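/- Let g_1, ..., g_m be positive reals. Then lim_{P→∞} [ max_{(P_k): P_k ≥ 0, ∑P_k ≤ P} ∑_{k=1}^m log(1 + P_k g_k) - ∑_{k=1}^m log(1 + (P/m) g_k) ] = 0; i.e., uniform power allocation is asymptotically optimal for sum rate over parallel channels. -/

import Mathlib

open Finset Filter

/-- Uniform power allocation is asymptotically optimal for sum rate over parallel
Gaussian channels: the waterfilling optimum minus the uniform-power sum rate tends
to `0` as `P → ∞`. -/
theorem stmt_16 (m : ℕ) (hm : 0 < m) (g : Fin m → ℝ) (hg : ∀ k, 0 < g k) :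
    Tendsto
      (fun P : ℝ =>
        (⨆ (Q : Fin m → ℝ) (_ : ∀ k, 0 ≤ Q k) (_ : (∑ k, Q k) ≤ P),
            ∑ k, Real.log (1 + Q k * g k))
          - ∑ k, Real.log (1 + (P / m) * g k))
      atTop (nhds 0) := by
  set S : ℝ := ∑ k, (g k)⁻¹ with hS_def
  have hmR : (0:ℝ) < m := Nat.cast_pos.2 hm
  have hS : 0 < S := Finset.sum_pos (fun k _ => inv_pos.2 (hg k)) ⟨⟨0, hm⟩, Finset.mem_univ _⟩
  -- eventual conditions
  have hev : ∀ᶠ P : ℝ in atTop, (0 ≤ P ∧ ∀ k, 1 ≤ (P + S)/m * g k) := by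
    refine (eventually_ge_atTop 0).and (eventually_all.2 fun k => ?_)
    have h1 : Tendsto (fun P : ℝ => (P + S)/m * g k) atTop atTop :=
      ((tendsto_atTop_add_const_right _ S tendsto_id).atTop_div_const hmR).atTop_mul_const (hg k)
    exact h1.eventually_ge_atTop 1
  -- key upper bound for the supremum
  have key : ∀ P : ℝ, 0 ≤ P → (∀ k, 1 ≤ (P + S)/m * g k) →
      ∀ Q : Fin m → ℝ, (∀ k, 0 ≤ Q k) → (∑ k, Q k) ≤ P →
      ∑ k, Real.log (1 + Q k * g k) ≤ ∑ k, Real.log ((P + S)/m * g k) := by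
    intro P hP0 hP Q hQ hQP
    set ν : ℝ := (P + S)/m with hν_def
    have hν : 0 < ν := div_pos (by linarith) hmR
    have term : ∀ k : Fin m, Real.log (1 + Q k * g k) ≤
        Real.log (ν * g k) + ((g k)⁻¹ + Q k)/ν - 1 := by
      intro k
      have hg' := hg k
      have h1 : (0:ℝ) < 1 + Q k * g k := by nlinarith [hQ k]
      have h2 : (0:ℝ) < ν * g k := mul_pos hν hg'
      have h3 := Real.log_le_sub_one_of_pos (div_pos h1 h2)
      rw [Real.log_div h1.ne' h2.ne'] at h3
      have h4 : (1 + Q k * g k) / (ν * g k) = ((g k)⁻¹ + Q k)/ν := by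
        rw [div_eq_div_iff h2.ne' hν.ne']
        field_simp
      rw [h4] at h3
      linarith
    calc ∑ k, Real.log (1 + Q k * g k)
        ≤ ∑ k, (Real.log (ν * g k) + ((g k)⁻¹ + Q k)/ν - 1) :=
          Finset.sum_le_sum fun k _ => term k
      _ = ∑ k, Real.log (ν * g k) + (S + ∑ k, Q k)/ν - m := by
          rw [Finset.sum_sub_distrib, Finset.sum_add_distrib, ← Finset.sum_div,
            Finset.sum_add_distrib]
          simp [Finset.card_univ, hS_def]
      _ ≤ ∑ k, Real.log (ν * g k) := by
          have : (S + ∑ k, Q k)/ν ≤ m := by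
            rw [div_le_iff₀ hν]
            have : (m:ℝ) * ν = P + S := by rw [hν_def, mul_div_cancel₀ _ hmR.ne']
            linarith
          linarith
  -- limit of the upper-bound gap
  have hlim : ∀ k : Fin m, Tendsto
      (fun P : ℝ => Real.log ((P + S)/m * g k) - Real.log (1 + P/m * g k))
      atTop (nhds 0) := by
    intro k
    set c : ℝ := S/m * g k - 1 with hc
    have hv : Tendsto (fun P : ℝ => 1 + P/m * g k) atTop atTop :=
      tendsto_atTop_add_const_left _ 1 ((tendsto_id.atTop_div_const hmR).atTop_mul_const (hg k))
    have hu : Tendsto (fun P : ℝ => (P + S)/m * g k) atTop atTop :=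
      ((tendsto_atTop_add_const_right _ S tendsto_id).atTop_div_const hmR).atTop_mul_const (hg k)
    have hr : Tendsto (fun P : ℝ => 1 + c / (1 + P/m * g k)) atTop (nhds 1) := by
      have h0 : Tendsto (fun P : ℝ => c / (1 + P/m * g k)) atTop (nhds 0) :=
        tendsto_const_nhds.div_atTop hv
      simpa using tendsto_const_nhds.add h0
    have hlog : Tendsto (fun P : ℝ => Real.log (1 + c / (1 + P/m * g k))) atTop (nhds 0) := by
      have := (Real.continuousAt_log one_ne_zero).tendsto.comp hr
      simpa [Function.comp_def] using this
    refine hlog.congr' ?_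
    filter_upwards [hu.eventually_gt_atTop 0, hv.eventually_gt_atTop 0] with P h1 h2
    have e0 : (P + S)/m * g k = (1 + P/m * g k) + c := by rw [hc]; ring
    have e1 : 1 + c / (1 + P/m * g k) = ((P + S)/m * g k) / (1 + P/m * g k) := by
      rw [e0, add_div, div_self h2.ne']
    rw [e1, Real.log_div h1.ne' h2.ne']
  have hlimsum : Tendsto
      (fun P : ℝ => ∑ k, (Real.log ((P + S)/m * g k) - Real.log (1 + P/m * g k)))
      atTop (nhds 0) := by
    have := tendsto_finset_sum (univ : Finset (Fin m))
      (fun k _ => hlim k)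
    simpa using this
  refine squeeze_zero' ?_ ?_ hlimsum
  · filter_upwards [hev] with P hP
    obtain ⟨hP0, hP1⟩ := hP
    have hB0 : 0 ≤ ∑ k, Real.log ((P + S)/m * g k) :=
      Finset.sum_nonneg fun k _ => Real.log_nonneg (hP1 k)
    rw [sub_nonneg]
    have bdd : BddAbove (Set.range fun Q : Fin m → ℝ =>
        ⨆ (_ : ∀ k, 0 ≤ Q k) (_ : (∑ k, Q k) ≤ P), ∑ k, Real.log (1 + Q k * g k)) := by
      refine ⟨∑ k, Real.log ((P + S)/m * g k), ?_⟩
      rintro x ⟨Q, rfl⟩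
      exact Real.iSup_le (fun hQ => Real.iSup_le
        (fun hQP => key P hP0 hP1 Q hQ hQP) hB0) hB0
    have hQu : ∀ k : Fin m, 0 ≤ (fun _ : Fin m => P / m) k := fun k => div_nonneg hP0 hmR.le
    have hQus : (∑ _k : Fin m, P / m) ≤ P := by
      rw [Finset.sum_const, Finset.card_univ, Fintype.card_fin, nsmul_eq_mul,
        mul_div_cancel₀ _ hmR.ne']
    calc ∑ k, Real.log (1 + P / m * g k)
        = ⨆ (_ : ∀ k : Fin m, 0 ≤ (fun _ : Fin m => P / m) k)
            (_ : (∑ k : Fin m, (fun _ : Fin m => P / m) k) ≤ P),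
            ∑ k, Real.log (1 + (fun _ : Fin m => P / m) k * g k) := by
          rw [ciSup_pos hQu, ciSup_pos hQus]
      _ ≤ _ := le_ciSup bdd (fun _ : Fin m => P / m)
  · filter_upwards [hev] with P hP
    obtain ⟨hP0, hP1⟩ := hP
    have hB0 : 0 ≤ ∑ k, Real.log ((P + S)/m * g k) :=
      Finset.sum_nonneg fun k _ => Real.log_nonneg (hP1 k)
    have supB : (⨆ (Q : Fin m → ℝ) (_ : ∀ k, 0 ≤ Q k) (_ : (∑ k, Q k) ≤ P),
        ∑ k, Real.log (1 + Q k * g k)) ≤ ∑ k, Real.log ((P + S)/m * g k) :=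
      Real.iSup_le (fun Q => Real.iSup_le (fun hQ => Real.iSup_le
        (fun hQP => key P hP0 hP1 Q hQ hQP) hB0) hB0) hB0
    rw [Finset.sum_sub_distrib]
    exact sub_le_sub_right supB _
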